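/- arXiv:1904.04903 — 3 statements merged into one kernel-verified Lean document; each statement's English description precedes it below -/
import Mathlib

section
/- The sequence T_d = d^{d-2} satisfies the recursion 2(d-1)·d^{d-2} = Σ_{a+b=d, a,b≥1} a·b·binom(d,a)·a^{a-2}·b^{b-2} for all d ≥ 2. -/
open Finset Polynomial

/-- Alternating Pascal split. -/
private lemma alt_pascal (m : ℕ) (p : ℕ → ℚ) :
    ∑ k ∈ range (m+2), (-1:ℚ)^k * (Nat.choose (m+1) k) * p k
      = ∑ k ∈ range (m+1), (-1:ℚ)^k * (Nat.choose m k) * (p k - p (k+1)) := by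
  have e1 : ∑ k ∈ range (m+2), (-1:ℚ)^k * (Nat.choose (m+1) k) * p k
      = (∑ k ∈ range (m+1), (-1:ℚ)^(k+1) * ((Nat.choose m k : ℚ) + (Nat.choose m (k+1) : ℚ)) * p (k+1)) + p 0 := by
    rw [Finset.sum_range_succ']
    simp [Nat.choose_succ_succ]
  have e2 : ∑ k ∈ range (m+1), (-1:ℚ)^k * (Nat.choose m k) * p k
      = (∑ k ∈ range m, (-1:ℚ)^(k+1) * (Nat.choose m (k+1) : ℚ) * p (k+1)) + p 0 := by
    rw [Finset.sum_range_succ']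
    simp
  have e3 : ∑ k ∈ range (m+1), (-1:ℚ)^(k+1) * (Nat.choose m (k+1) : ℚ) * p (k+1)
      = ∑ k ∈ range m, (-1:ℚ)^(k+1) * (Nat.choose m (k+1) : ℚ) * p (k+1) := by
    rw [Finset.sum_range_succ]
    simp
  rw [e1]
  have : ∀ k ∈ range (m+1), (-1:ℚ)^(k+1) * ((Nat.choose m k : ℚ) + (Nat.choose m (k+1) : ℚ)) * p (k+1)
      = (-(-1:ℚ)^k * (Nat.choose m k : ℚ) * p (k+1)) + (-1:ℚ)^(k+1) * (Nat.choose m (k+1) : ℚ) * p (k+1) := by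
    intro k _; ring
  rw [Finset.sum_congr rfl this, Finset.sum_add_distrib, e3]
  have e4 : ∑ k ∈ range m, (-1:ℚ)^(k+1) * (Nat.choose m (k+1) : ℚ) * p (k+1)
      = (∑ k ∈ range (m+1), (-1:ℚ)^k * (Nat.choose m k : ℚ) * p k) - p 0 := by
    rw [e2]; ring
  have e5 : ∑ x ∈ range (m+1), -(-1:ℚ)^x * (Nat.choose m x : ℚ) * p (x+1)
      = -∑ x ∈ range (m+1), (-1:ℚ)^x * (Nat.choose m x : ℚ) * p (x+1) := by
    rw [← Finset.sum_neg_distrib]; exact Finset.sum_congr rfl (fun k _ => by ring)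
  rw [e4, e5,
    show (∑ k ∈ range (m+1), (-1:ℚ)^k * (Nat.choose m k : ℚ) * (p k - p (k+1)))
      = ∑ k ∈ range (m+1), ((-1:ℚ)^k * (Nat.choose m k : ℚ) * p k - (-1:ℚ)^k * (Nat.choose m k : ℚ) * p (k+1))
      from Finset.sum_congr rfl (fun k _ => by ring),
    Finset.sum_sub_distrib]
  ring


/-- Alternating binomial sums kill polynomials of low degree. -/
private lemma fin_diff : ∀ (n j : ℕ), j < n → ∀ x : ℚ,
    ∑ k ∈ range (n+1), (-1:ℚ)^k * (Nat.choose n k) * (x + k)^j = 0 := by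
  intro n
  induction n with
  | zero => intro j hj; omega
  | succ m ih =>
    intro j hj x
    have hAP := alt_pascal m (fun k => (x + (k:ℚ))^j)
    rw [hAP]
    have hterm : ∀ k ∈ range (m+1), ((x + (k:ℚ))^j - (x + ((k+1:ℕ):ℚ))^j)
        = -∑ i ∈ range j, (Nat.choose j i : ℚ) * (x + k)^i := by
      intro k _
      have hb : (x + ((k+1:ℕ):ℚ)) = (x + (k:ℚ)) + 1 := by push_cast; ring
      rw [hb]
      nth_rewrite 2 [add_pow]
      rw [Finset.sum_range_succ]
      simp only [one_pow, Nat.choose_self, Nat.cast_one, mul_one]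
      rw [show ∑ i ∈ range j, (x+(k:ℚ))^i * (Nat.choose j i : ℚ)
          = ∑ i ∈ range j, (Nat.choose j i : ℚ) * (x+(k:ℚ))^i
          from Finset.sum_congr rfl (fun i _ => mul_comm _ _)]
      ring
    have key : ∀ k ∈ range (m+1), (-1:ℚ)^k * (Nat.choose m k : ℚ) * ((x + (k:ℚ))^j - (x + ((k+1:ℕ):ℚ))^j)
        = ∑ i ∈ range j, (-(Nat.choose j i : ℚ)) * ((-1:ℚ)^k * (Nat.choose m k : ℚ) * (x + k)^i) := by
      intro k hk
      rw [hterm k hk, mul_neg, Finset.mul_sum, ← Finset.sum_neg_distrib]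
      exact Finset.sum_congr rfl fun i _ => by ring
    rw [Finset.sum_congr rfl key, Finset.sum_comm]
    refine Finset.sum_eq_zero fun i hi => ?_
    rw [← Finset.mul_sum, ih i (by have := Finset.mem_range.mp hi; omega) x, mul_zero]

/-- "Rooted-tree" coefficient: `1` for `k = 0`, `x (x+k)^(k-1)` otherwise. -/
private def dc (x : ℚ) : ℕ → ℚ := fun k => if k = 0 then 1 else x * (x + k)^(k-1)

private lemma dc_mul_pow (x : ℚ) (k n : ℕ) (hk : k ≤ n+1) :
    dc x k * (x + k)^(n+1-k) = x * (x + k)^n := by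
  rcases Nat.eq_zero_or_pos k with rfl | hk0
  · simp [dc, pow_succ, mul_comm]
  · unfold dc
    rw [if_neg (by omega), mul_assoc, ← pow_add]
    congr 2
    omega

private lemma choose_absorb (n k : ℕ) (hk : k ≤ n) :
    Nat.choose (n+1) k * (n+1-k) = (n+1) * Nat.choose n k := by
  have h := Nat.add_one_mul_choose_eq n (n-k)
  rw [Nat.choose_symm hk] at h
  have hs : Nat.choose (n+1) (n-k+1) = Nat.choose (n+1) k := by
    rw [show n-k+1 = (n+1)-k from by omega, Nat.choose_symm (by omega)]
  rw [hs] at h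
  rw [show n+1-k = n-k+1 from by omega]
  simpa using h.symm

/-- Abel's identity, polynomial form. -/
private lemma abel_poly (x : ℚ) : ∀ (n : ℕ) (y : ℚ),
    ∑ k ∈ range (n+1), Polynomial.C ((Nat.choose n k : ℚ) * dc x k) *
        (Polynomial.X + Polynomial.C (y + ((n - k : ℕ) : ℚ)))^(n-k)
      = (Polynomial.X + Polynomial.C (x + y + n))^n := by
  intro n
  induction n with
  | zero => intro y; simp [dc]
  | succ n ih =>
    intro y
    set t : ℚ := -(x + y + ((n+1:ℕ):ℚ)) with ht
    set L : ℚ[X] := ∑ k ∈ range (n+1+1), Polynomial.C ((Nat.choose (n+1) k : ℚ) * dc x k) *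
        (Polynomial.X + Polynomial.C (y + ((n+1 - k : ℕ) : ℚ)))^(n+1-k) with hL
    set R : ℚ[X] := (Polynomial.X + Polynomial.C (x + y + ((n+1:ℕ):ℚ)))^(n+1) with hR
    have hderiv : derivative L = derivative R := by
      rw [hL, hR, derivative_sum, derivative_X_add_C_pow]
      have e1 : ∀ k ∈ range (n+1+1),
          derivative (Polynomial.C ((Nat.choose (n+1) k : ℚ) * dc x k) *
            (Polynomial.X + Polynomial.C (y + ((n+1 - k : ℕ) : ℚ)))^(n+1-k))
          = Polynomial.C ((Nat.choose (n+1) k : ℚ) * ((n+1-k : ℕ) : ℚ) * dc x k) *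
            (Polynomial.X + Polynomial.C (y + ((n+1 - k : ℕ) : ℚ)))^(n+1-k-1) := by
        intro k _
        rw [derivative_C_mul, derivative_X_add_C_pow]
        simp only [Polynomial.C_mul]
        ring
      rw [Finset.sum_congr rfl e1, Finset.sum_range_succ]
      simp only [Nat.sub_self, Nat.cast_zero, mul_zero, zero_mul, map_zero, add_zero]
      have e2 : ∀ k ∈ range (n+1),
          Polynomial.C ((Nat.choose (n+1) k : ℚ) * ((n+1-k : ℕ) : ℚ) * dc x k) *
            (Polynomial.X + Polynomial.C (y + ((n+1 - k : ℕ) : ℚ)))^(n+1-k-1)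
          = Polynomial.C ((n+1 : ℚ)) * (Polynomial.C ((Nat.choose n k : ℚ) * dc x k) *
            (Polynomial.X + Polynomial.C ((y+1) + ((n - k : ℕ) : ℚ)))^(n-k)) := by
        intro k hk
        have hk' : k ≤ n := by simpa [Nat.lt_succ_iff] using Finset.mem_range.mp hk
        have h1 : n+1-k-1 = n-k := by omega
        have h2 : y + ((n+1-k : ℕ) : ℚ) = (y+1) + ((n-k : ℕ) : ℚ) := by
          rw [show n+1-k = (n-k)+1 from by omega]; push_cast; ring
        have h3 : (Nat.choose (n+1) k : ℚ) * ((n+1-k : ℕ) : ℚ) = (n+1 : ℚ) * (Nat.choose n k : ℚ) := by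
          exact_mod_cast choose_absorb n k hk' 
        rw [h1, h2, h3]
        simp only [Polynomial.C_mul]
        ring
      rw [Finset.sum_congr rfl e2, ← Finset.mul_sum, ih (y+1)]
      rw [show x + (y+1) + (n:ℚ) = x + y + ((n+1:ℕ):ℚ) from by push_cast; ring]
      rw [show n+1-1 = n from rfl]
      norm_cast
    have hevalL : Polynomial.eval t L = 0 := by
      rw [hL, Polynomial.eval_finset_sum]
      simp only [Polynomial.eval_mul, Polynomial.eval_pow, Polynomial.eval_add,
        Polynomial.eval_X, Polynomial.eval_C]
      have hterm : ∀ k ∈ range (n+1+1),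
          ((Nat.choose (n+1) k : ℚ) * dc x k) * (t + (y + ((n+1-k : ℕ) : ℚ)))^(n+1-k)
          = ((-1:ℚ)^(n+1) * x) * ((-1:ℚ)^k * (Nat.choose (n+1) k : ℚ) * (x + k)^n) := by
        intro k hk
        have hk' : k ≤ n+1 := by
          have := Finset.mem_range.mp hk; omega
        have hc : t + (y + ((n+1-k : ℕ) : ℚ)) = -(x + k) := by
          rw [ht, show ((n+1-k:ℕ):ℚ) = ((n+1:ℕ):ℚ) - (k:ℚ) from by
            rw [Nat.cast_sub hk']]
          ring
        have hsgn : (-1:ℚ)^(n+1-k) = (-1:ℚ)^(n+1) * (-1:ℚ)^k := by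
          rw [← pow_add, show n+1+k = (n+1-k) + 2*k from by omega, pow_add, pow_mul,
            neg_one_sq, one_pow, mul_one]
        rw [hc, neg_pow, hsgn]
        have hd := dc_mul_pow x k n hk'
        calc (Nat.choose (n+1) k : ℚ) * dc x k * ((-1:ℚ)^(n+1) * (-1:ℚ)^k * (x + k)^(n+1-k))
            = ((-1:ℚ)^(n+1) * (-1:ℚ)^k * (Nat.choose (n+1) k : ℚ)) * (dc x k * (x + k)^(n+1-k)) := by ring
          _ = ((-1:ℚ)^(n+1) * (-1:ℚ)^k * (Nat.choose (n+1) k : ℚ)) * (x * (x + k)^n) := by rw [hd]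
          _ = ((-1:ℚ)^(n+1) * x) * ((-1:ℚ)^k * (Nat.choose (n+1) k : ℚ) * (x + k)^n) := by ring
      rw [Finset.sum_congr rfl hterm, ← Finset.mul_sum,
        fin_diff (n+1) n (by omega) x, mul_zero]
    have hevalR : Polynomial.eval t R = 0 := by
      rw [hR]
      simp only [Polynomial.eval_pow, Polynomial.eval_add, Polynomial.eval_X, Polynomial.eval_C, ht]
      rw [show -(x + y + ((n+1:ℕ):ℚ)) + (x + y + ((n+1:ℕ):ℚ)) = 0 from by ring]
      exact zero_pow (by omega)
    have h0 : derivative (L - R) = 0 := by rw [derivative_sub, hderiv, sub_self]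
    have hC := Polynomial.eq_C_of_derivative_eq_zero h0
    have h2 : Polynomial.eval t (L - R) = 0 := by
      rw [Polynomial.eval_sub, hevalL, hevalR, sub_self]
    rw [hC, Polynomial.eval_C] at h2
    have : L - R = 0 := by rw [hC, h2, map_zero]
    exact sub_eq_zero.mp this

/-- Abel's identity over ℚ. -/
private lemma abel_eval (x y : ℚ) (n : ℕ) :
    ∑ k ∈ range (n+1), (Nat.choose n k : ℚ) * dc x k * (y + ((n-k:ℕ):ℚ))^(n-k)
      = (x+y+(n:ℚ))^n := by
  have h := congrArg (Polynomial.eval y) (abel_poly x n 0)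
  simp only [Polynomial.eval_finset_sum, Polynomial.eval_mul, Polynomial.eval_pow,
    Polynomial.eval_add, Polynomial.eval_X, Polynomial.eval_C, zero_add] at h
  rw [show x+y+(n:ℚ) = y + (x + 0 + n) from by ring]
  rw [← h]

/-- Hurwitz's identity over ℚ. -/
private lemma hurwitz (x y : ℚ) (m : ℕ) :
    ∑ k ∈ range (m+2), (Nat.choose (m+1) k : ℚ) * dc x k * dc y (m+1-k)
      = (x+y) * (x+y+((m+1:ℕ):ℚ))^m := by
  have hA := abel_eval x y (m+1)
  have hsplit : ∀ k ∈ range (m+2),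
      (Nat.choose (m+1) k : ℚ) * dc x k * (y + ((m+1-k:ℕ):ℚ))^(m+1-k)
      = (Nat.choose (m+1) k : ℚ) * dc x k * dc y (m+1-k)
        + (Nat.choose (m+1) k : ℚ) * ((m+1-k:ℕ):ℚ) * dc x k * (y + ((m+1-k:ℕ):ℚ))^(m+1-k-1) := by
    intro k hk
    rcases Nat.eq_zero_or_pos (m+1-k) with h0 | hpos
    · rw [h0]; simp [dc]
    · have hp : (y + ((m+1-k:ℕ):ℚ))^(m+1-k)
          = (y + ((m+1-k:ℕ):ℚ))^(m+1-k-1) * (y + ((m+1-k:ℕ):ℚ)) := by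
        rw [← pow_succ]; congr 1; omega
      rw [hp, show dc y (m+1-k) = y * (y + ((m+1-k:ℕ):ℚ))^(m+1-k-1) from by
        unfold dc; rw [if_neg (by omega)]]
      ring
  rw [Finset.sum_congr rfl hsplit, Finset.sum_add_distrib] at hA
  have h2 : ∑ k ∈ range (m+2),
      (Nat.choose (m+1) k : ℚ) * ((m+1-k:ℕ):ℚ) * dc x k * (y + ((m+1-k:ℕ):ℚ))^(m+1-k-1)
      = ((m+1:ℕ):ℚ) * (x+y+((m+1:ℕ):ℚ))^m := by
    rw [Finset.sum_range_succ]
    simp only [Nat.sub_self, Nat.cast_zero, mul_zero, zero_mul, add_zero]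
    have e : ∀ k ∈ range (m+1),
        (Nat.choose (m+1) k : ℚ) * ((m+1-k:ℕ):ℚ) * dc x k * (y + ((m+1-k:ℕ):ℚ))^(m+1-k-1)
        = ((m+1:ℕ):ℚ) * ((Nat.choose m k : ℚ) * dc x k * ((y+1) + ((m-k:ℕ):ℚ))^(m-k)) := by
      intro k hk
      have hk' : k ≤ m := by have := Finset.mem_range.mp hk; omega
      have h1 : m+1-k-1 = m-k := by omega
      have hc : y + ((m+1-k:ℕ):ℚ) = (y+1) + ((m-k:ℕ):ℚ) := by
        rw [show m+1-k = (m-k)+1 from by omega]; push_cast; ring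
      have h3 : (Nat.choose (m+1) k : ℚ) * ((m+1-k:ℕ):ℚ)
          = ((m+1:ℕ):ℚ) * (Nat.choose m k : ℚ) := by
        exact_mod_cast choose_absorb m k hk'
      rw [h1, hc, h3]
      ring
    rw [Finset.sum_congr rfl e, ← Finset.mul_sum, abel_eval x (y+1) m]
    rw [show x+(y+1)+(m:ℚ) = x+y+((m+1:ℕ):ℚ) from by push_cast; ring]
  rw [h2] at hA
  linear_combination hA

private lemma dc_one (k : ℕ) : dc 1 k = (((k+1)^(k-1) : ℕ) : ℚ) := by
  cases k with
  | zero => simp [dc]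
  | succ j =>
    unfold dc
    rw [if_neg (by omega)]
    push_cast
    ring_nf

/-- The key sum, in natural numbers. -/
private lemma key_sum (m : ℕ) :
    ∑ k ∈ range (m+2), Nat.choose (m+1) k * (k+1)^(k-1) * (m+1-k+1)^(m+1-k-1)
      = 2 * (m+3)^m := by
  have h := hurwitz 1 1 m
  have hL : ∀ k ∈ range (m+2), (Nat.choose (m+1) k : ℚ) * dc 1 k * dc 1 (m+1-k)
      = ((Nat.choose (m+1) k * (k+1)^(k-1) * (m+1-k+1)^(m+1-k-1) : ℕ) : ℚ) := by
    intro k _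
    rw [dc_one, dc_one]
    push_cast
    ring
  rw [Finset.sum_congr rfl hL, ← Nat.cast_sum] at h
  have hR : ((1:ℚ)+1) * (1+1+((m+1:ℕ):ℚ))^m = ((2 * (m+3)^m : ℕ) : ℚ) := by
    push_cast; ring
  rw [hR] at h
  exact_mod_cast h

/-- The sequence `T d = d^(d-2)` satisfies the tree recursion
`2(d-1) d^(d-2) = ∑_{a+b=d, a,b≥1} a b C(d,a) a^(a-2) b^(b-2)` for `d ≥ 2`. -/
theorem cayley_satisfies_tree_recursion (d : ℕ) (hd : 2 ≤ d) :
    2 * (d - 1) * d ^ (d - 2) =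
      ∑ a ∈ Finset.Ioo 0 d,
        a * (d - a) * Nat.choose d a * a ^ (a - 2) * (d - a) ^ (d - a - 2) := by
  rcases Nat.lt_or_ge d 3 with h3 | h3
  · interval_cases d
    decide
  · obtain ⟨m, rfl⟩ : ∃ m, d = m+3 := ⟨d-3, by omega⟩
    rw [show Finset.Ioo 0 (m+3) = Finset.Ico 1 (m+3) from (Finset.Ico_add_one_left_eq_Ioo 0 (m+3)).symm]
    rw [Finset.sum_Ico_eq_sum_range]
    rw [show m+3-1 = m+2 from rfl]
    have e : ∀ i ∈ range (m+2),
        (1+i) * ((m+3) - (1+i)) * Nat.choose (m+3) (1+i) * (1+i)^((1+i)-2) * ((m+3)-(1+i))^(((m+3)-(1+i))-2)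
        = ((m+3)*(m+2)) * (Nat.choose (m+1) i * (i+1)^(i-1) * (m+1-i+1)^(m+1-i-1)) := by
      intro i hi
      have hi' : i ≤ m+1 := by have := Finset.mem_range.mp hi; omega
      have c1 : (m+3) - (1+i) = (m+1-i)+1 := by omega
      have c2 : (1+i) * Nat.choose (m+3) (1+i) = (m+3) * Nat.choose (m+2) i := by
        have h := Nat.add_one_mul_choose_eq (m+2) i
        rw [show 1+i = i+1 from by omega, show m+3 = m+2+1 from by omega, mul_comm]
        exact h.symm
      have c3 : Nat.choose (m+2) i * (m+2-i) = (m+2) * Nat.choose (m+1) i :=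
        choose_absorb (m+1) i hi'
      have c4 : (1+i)-2 = i-1 := by omega
      have c5 : ((m+1-i)+1)-2 = (m+1-i)-1 := by omega
      rw [c1, c4, c5]
      calc (1+i) * ((m+1-i)+1) * Nat.choose (m+3) (1+i) * (1+i)^(i-1) * ((m+1-i)+1)^((m+1-i)-1)
          = ((1+i) * Nat.choose (m+3) (1+i)) * (((m+1-i)+1) * ((1+i)^(i-1) * ((m+1-i)+1)^((m+1-i)-1))) := by
            ring
        _ = ((m+3) * Nat.choose (m+2) i) * (((m+1-i)+1) * ((1+i)^(i-1) * ((m+1-i)+1)^((m+1-i)-1))) := by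
            rw [c2]
        _ = (m+3) * ((Nat.choose (m+2) i * (m+2-i)) * ((1+i)^(i-1) * ((m+1-i)+1)^((m+1-i)-1))) := by
            rw [show (m+1-i)+1 = m+2-i from by omega]; ring
        _ = (m+3) * (((m+2) * Nat.choose (m+1) i) * ((1+i)^(i-1) * ((m+1-i)+1)^((m+1-i)-1))) := by
            rw [c3]
        _ = ((m+3)*(m+2)) * (Nat.choose (m+1) i * (i+1)^(i-1) * (m+1-i+1)^(m+1-i-1)) := by
            rw [show 1+i = i+1 from by omega]; ring
    rw [Finset.sum_congr rfl e, ← Finset.mul_sum, key_sum m]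
    rw [show m+3-2 = m+1 from rfl]
    ring
end

section
/- Lagrange inversion for the tree generating function: the formal power series y(x) = Σ_{k≥1} k^{k-1} x^k / k! satisfies y(x)·e^{-y(x)} = x as formal power series. -/
lemma finite_diff : ∀ (n m : ℕ) (x : ℚ), m < n →
    ∑ k ∈ Finset.range (n+1), (-1:ℚ)^k * (n.choose k) * (x+k)^m = 0 := by
  intro n
  induction n with
  | zero => intro m x hm; omega
  | succ n ih =>
    intro m x hm
    have step : ∑ k ∈ Finset.range (n+2), (-1:ℚ)^k * ((n+1).choose k) * (x+k)^m
        = ∑ k ∈ Finset.range (n+1), (-1:ℚ)^k * (n.choose k) * ((x+k)^m - (x+(k+1:ℕ))^m) := by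
      rw [Finset.sum_range_succ' (fun k => (-1:ℚ)^k * ((n+1).choose k) * (x+k)^m)]
      have expand : ∀ k ∈ Finset.range (n+1),
          (-1:ℚ)^(k+1) * ((n+1).choose (k+1)) * (x+((k+1:ℕ):ℚ))^m
          = (-1:ℚ)^(k+1) * (n.choose k) * (x+((k+1:ℕ):ℚ))^m
            + (-1:ℚ)^(k+1) * (n.choose (k+1)) * (x+((k+1:ℕ):ℚ))^m := by
        intro k _
        rw [Nat.choose_succ_succ]
        push_cast
        ring
      rw [Finset.sum_congr rfl expand, Finset.sum_add_distrib]
      have reassemble : (∑ k ∈ Finset.range (n+1),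
            (-1:ℚ)^(k+1) * (n.choose (k+1)) * (x+((k+1:ℕ):ℚ))^m)
          + (-1:ℚ)^0 * ((n.choose 0 : ℕ)) * (x+((0:ℕ):ℚ))^m
          = ∑ k ∈ Finset.range (n+1), (-1:ℚ)^k * (n.choose k) * (x+k)^m := by
        rw [← Finset.sum_range_succ' (fun k => (-1:ℚ)^k * (n.choose k) * (x+k)^m) (n+1),
          Finset.sum_range_succ]
        simp
      rw [show (((n+1).choose 0 : ℕ):ℚ) = ((n.choose 0 : ℕ):ℚ) by simp,
        add_right_comm, add_assoc, add_comm ((-1:ℚ)^0 * ((n.choose 0 : ℕ):ℚ) * (x+((0:ℕ):ℚ))^m), reassemble, ← Finset.sum_add_distrib]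
      apply Finset.sum_congr rfl
      intro k _
      push_cast
      ring
    rw [step]
    have diff : ∀ k ∈ Finset.range (n+1),
        (-1:ℚ)^k * (n.choose k) * ((x+k)^m - (x+(k+1:ℕ))^m)
        = ∑ i ∈ Finset.range m, (-(m.choose i:ℚ)) * ((-1:ℚ)^k * (n.choose k) * (x+k)^i) := by
      intro k _
      have hb : (x+((k+1:ℕ):ℚ))^m = ∑ i ∈ Finset.range (m+1), (x+(k:ℚ))^i * (m.choose i) := by
        push_cast
        have := add_pow (x+(k:ℚ)) 1 m
        simp only [one_pow, mul_one] at this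
        rw [show x + ((k:ℚ)+1) = (x + k) + 1 by ring, this]
      rw [hb, Finset.sum_range_succ, Nat.choose_self, Nat.cast_one, mul_one,
        show ((x+(k:ℚ))^m - (∑ i ∈ Finset.range m, (x+(k:ℚ))^i * (m.choose i:ℚ) + (x+(k:ℚ))^m))
          = -∑ i ∈ Finset.range m, (x+(k:ℚ))^i * (m.choose i:ℚ) from by ring,
        mul_neg, Finset.mul_sum, ← Finset.sum_neg_distrib]
      exact Finset.sum_congr rfl fun i _ => by ring
    rw [Finset.sum_congr rfl diff, Finset.sum_comm]
    apply Finset.sum_eq_zero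
    intro i hi
    rw [← Finset.mul_sum, ih i x (by simp at hi; omega), mul_zero]



open Polynomial in
lemma abelP : ∀ (n : ℕ) (x : ℚ),
    (X + C (n:ℚ))^n
      + ∑ k ∈ Finset.Icc 1 n, C ((n.choose k : ℚ) * x * (x+k)^(k-1))
          * (X + C ((n:ℚ) - k))^(n-k)
    = (C x + X + C (n:ℚ)) ^ n := by
  intro n
  induction n with
  | zero => intro x; simp
  | succ n ih =>
    intro x
    have hcomp : (C x + X + C ((n:ℚ)+1))^n
        = (X + C ((n:ℚ)+1))^n + ∑ k ∈ Finset.Icc 1 n,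
            C ((n.choose k : ℚ) * x * (x+k)^(k-1)) * (X + C ((n:ℚ) - k + 1))^(n-k) := by
      have h := congrArg (fun p : ℚ[X] => p.comp (X+1)) (ih x)
      simp only [add_comp, pow_comp, Polynomial.sum_comp, mul_comp, C_comp, X_comp,
        Finset.sum_comp] at h
      simp only [map_add, map_one] at *
      rw [show (C x + X + (C (n:ℚ) + 1) : ℚ[X]) = C x + (X + 1) + C (n:ℚ) from by ring, ← h]
      congr 1
      · ring
      · exact Finset.sum_congr rfl fun k _ => by ring
    push_cast
    set L : ℚ[X] := (X + C ((n:ℚ)+1))^(n+1)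
      + ∑ k ∈ Finset.Icc 1 (n+1), C (((n+1).choose k : ℚ) * x * (x+(k:ℚ))^(k-1))
          * (X + C ((n:ℚ) + 1 - k))^(n+1-k) with hLdef
    set R : ℚ[X] := (C x + X + C ((n:ℚ)+1)) ^ (n+1) with hRdef
    have hderiv : derivative L = derivative R := by
      have hdL : derivative L = C ((n:ℚ)+1) * (X + C ((n:ℚ)+1))^n
          + ∑ k ∈ Finset.Icc 1 (n+1), C (((n+1).choose k : ℚ) * x * (x+(k:ℚ))^(k-1))
              * (C (((n+1-k : ℕ)):ℚ) * (X + C ((n:ℚ) + 1 - k))^(n+1-k-1)) := by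
        rw [hLdef]
        rw [derivative_add, derivative_pow, derivative_sum]
        simp only [derivative_add, derivative_X, derivative_C, derivative_mul,
          derivative_pow, zero_mul, zero_add, add_zero, mul_one, Nat.add_sub_cancel]
        push_cast
        ring
      have hdR : derivative R = C ((n:ℚ)+1) * (X + C ((n:ℚ)+1))^n
          + ∑ k ∈ Finset.Icc 1 n, C ((n:ℚ)+1) *
              (C ((n.choose k : ℚ) * x * (x+(k:ℚ))^(k-1)) * (X + C ((n:ℚ) - k + 1))^(n-k)) := by
        rw [hRdef, derivative_pow]
        simp only [derivative_add, derivative_X, derivative_C, zero_add, add_zero, mul_one,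
          Nat.add_sub_cancel]
        push_cast
        rw [hcomp, mul_add, Finset.mul_sum]
      rw [hdL, hdR]
      congr 1
      rw [Finset.sum_Icc_succ_top (by omega : 1 ≤ n+1)]
      rw [show n+1-(n+1) = 0 from by omega]
      simp only [Nat.cast_zero, map_zero, zero_mul, mul_zero, add_zero]
      apply Finset.sum_congr rfl
      intro k hk
      have hk' : 1 ≤ k ∧ k ≤ n := by simpa [Finset.mem_Icc] using hk
      have hchoose : (((n+1).choose k : ℚ)) * ((n+1-k : ℕ) : ℚ)
          = ((n:ℚ)+1) * (n.choose k : ℚ) := by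
        have := Nat.choose_mul_succ_eq n k
        have h2 : ((n.choose k * (n+1) : ℕ) : ℚ) = (((n+1).choose k * (n+1-k) : ℕ) : ℚ) := by
          exact_mod_cast this
        push_cast at h2
        push_cast
        linarith [h2]
      rw [show n+1-k-1 = n-k from by omega]
      rw [show ((n:ℚ) + 1 - k) = ((n:ℚ) - k + 1) from by ring]
      have hC : C (((n+1).choose k : ℚ) * x * (x+(k:ℚ))^(k-1)) * C (((n+1-k : ℕ)):ℚ)
          = C ((n:ℚ)+1) * C ((n.choose k : ℚ) * x * (x+(k:ℚ))^(k-1)) := by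
        rw [← C_mul, ← C_mul]
        congr 1
        linear_combination (x * (x+(k:ℚ))^(k-1)) * hchoose
      calc C (((n+1).choose k : ℚ) * x * (x+(k:ℚ))^(k-1))
            * (C (((n+1-k : ℕ)):ℚ) * (X + C ((n:ℚ) - k + 1))^(n-k))
          = (C (((n+1).choose k : ℚ) * x * (x+(k:ℚ))^(k-1)) * C (((n+1-k : ℕ)):ℚ))
            * (X + C ((n:ℚ) - k + 1))^(n-k) := by ring
        _ = _ := by rw [hC]; ring
    have key := Polynomial.eq_C_of_derivative_eq_zero (by rw [derivative_sub, hderiv, sub_self] : derivative (L - R) = 0)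
    set t : ℚ := -(x + ((n:ℚ)+1)) with ht
    have hevalR : eval t R = 0 := by
      rw [hRdef]
      simp only [eval_pow, eval_add, eval_C, eval_X]
      rw [show x + t + ((n:ℚ)+1) = 0 from by rw [ht]; ring]
      simp
    have hevalL : eval t L = 0 := by
      rw [hLdef]
      simp only [eval_pow, eval_add, eval_C, eval_X, eval_mul, eval_finset_sum]
      have hterm : ∀ k ∈ Finset.Icc 1 (n+1),
          ((n+1).choose k : ℚ) * x * (x+(k:ℚ))^(k-1) * (t + ((n:ℚ) + 1 - k))^(n+1-k)
          = ((-1:ℚ)^(n+1) * x) * ((-1:ℚ)^k * (((n+1).choose k : ℚ)) * (x+(k:ℚ))^n) := by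
        intro k hk
        have hk' : 1 ≤ k ∧ k ≤ n+1 := by simpa [Finset.mem_Icc] using hk
        have hbase : t + ((n:ℚ) + 1 - k) = -(x + (k:ℚ)) := by rw [ht]; ring
        rw [hbase, neg_pow]
        have hsgn : (-1:ℚ)^(n+1-k) = (-1:ℚ)^(n+1) * (-1:ℚ)^k := by
          rw [← pow_add, show n+1+k = (n+1-k) + 2*k from by omega, pow_add, pow_mul]
          norm_num
        rw [hsgn]
        have hpow : (x+(k:ℚ))^(k-1) * (x+(k:ℚ))^(n+1-k) = (x+(k:ℚ))^n := by
          rw [← pow_add, show (k-1) + (n+1-k) = n from by omega]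
        calc ((n+1).choose k : ℚ) * x * (x+(k:ℚ))^(k-1)
              * ((-1:ℚ)^(n+1) * (-1:ℚ)^k * (x+(k:ℚ))^(n+1-k))
            = ((-1:ℚ)^(n+1) * x) * ((-1:ℚ)^k * (((n+1).choose k : ℚ))
                * ((x+(k:ℚ))^(k-1) * (x+(k:ℚ))^(n+1-k))) := by ring
          _ = _ := by rw [hpow]
      rw [Finset.sum_congr rfl hterm, ← Finset.mul_sum]
      have hfd := finite_diff (n+1) n x (lt_add_one n)
      have hsplit : ∑ k ∈ Finset.range (n+2), (-1:ℚ)^k * ((n+1).choose k : ℚ) * (x+(k:ℚ))^n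
          = (x^n) + ∑ k ∈ Finset.Icc 1 (n+1), (-1:ℚ)^k * ((n+1).choose k : ℚ) * (x+(k:ℚ))^n := by
        rw [Finset.sum_range_succ'
          (fun k => (-1:ℚ)^k * ((n+1).choose k : ℚ) * (x+(k:ℚ))^n) (n+1)]
        rw [show Finset.Icc 1 (n+1) = Finset.Ico 1 (n+2) from (Finset.Ico_add_one_right_eq_Icc 1 (n+1)).symm,
          Finset.sum_Ico_eq_sum_range]
        simp only [show n+2-1 = n+1 from rfl]
        rw [add_comm]
        congr 1
        · simp
        · apply Finset.sum_congr rfl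
          intro j _
          rw [add_comm 1 j]
      have hsum : ∑ k ∈ Finset.Icc 1 (n+1), (-1:ℚ)^k * ((n+1).choose k : ℚ) * (x+(k:ℚ))^n
          = -x^n := by
        rw [hfd] at hsplit
        linarith [hsplit]
      rw [hsum]
      rw [show t + ((n:ℚ)+1) = -x from by rw [ht]; ring, neg_pow]
      ring
    have : L - R = 0 := by
      rw [key]
      have := congrArg (eval t) key
      rw [eval_sub, hevalL, hevalR, eval_C] at this
      rw [← this]
      simp
    exact sub_eq_zero.mp this

open Polynomial in
lemma treeIdent (n : ℕ) :
    ∑ k ∈ Finset.Icc 1 n, (n.choose k : ℚ) * (k:ℚ)^(k-1) * (((n-k : ℕ)):ℚ)^(n-k)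
      = (n:ℚ) * (n:ℚ)^(n-1) := by
  set P : ℚ[X] := ∑ k ∈ Finset.Icc 1 n,
    C ((n.choose k : ℚ) * (((n-k : ℕ)):ℚ)^(n-k)) * (X * (X + C (k:ℚ))^(k-1)) with hP
  set Q : ℚ[X] := (X + C (n:ℚ))^n - C ((n:ℚ)^n) with hQ
  have hPQ : P = Q := by
    apply Polynomial.funext
    intro x
    have h := congrArg (eval (0:ℚ)) (abelP n x)
    simp only [eval_pow, eval_add, eval_C, eval_X, eval_mul, eval_finset_sum, zero_add, add_zero] at h
    have h2 : ∀ k ∈ Finset.Icc 1 n, (n.choose k : ℚ) * x * (x+(k:ℚ))^(k-1) * ((n:ℚ) - (k:ℚ))^(n-k)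
        = (n.choose k : ℚ) * (((n-k : ℕ)):ℚ)^(n-k) * (x * (x+(k:ℚ))^(k-1)) := by
      intro k hk
      have hk' : 1 ≤ k ∧ k ≤ n := by simpa [Finset.mem_Icc] using hk
      rw [show ((n:ℚ) - (k:ℚ)) = (((n-k : ℕ)):ℚ) from by
        rw [Nat.cast_sub hk'.2]]
      ring
    rw [Finset.sum_congr rfl h2] at h
    rw [hP, hQ]
    simp only [eval_finset_sum, eval_mul, eval_add, eval_pow, eval_C, eval_X, eval_sub]
    linarith [h]
  have h3 := congrArg (fun p : ℚ[X] => eval 0 (derivative p)) hPQ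
  rw [hP, hQ] at h3
  simp only [derivative_sum, derivative_sub, derivative_mul, derivative_C, derivative_X,
    derivative_pow, derivative_add, zero_mul, zero_add, add_zero, mul_one, one_mul,
    eval_finset_sum, eval_mul, eval_add, eval_pow, eval_C, eval_X, eval_sub, eval_zero,
    mul_zero, sub_zero] at h3
  rw [← h3]
  apply Finset.sum_congr rfl
  intro k hk
  ring


open PowerSeries

/-- Formal composition `f ∘ g` of power series, valid when `g` has zero
constant term: the `n`-th coefficient only depends on `∑_{k ≤ n} f_k g^k`. -/
noncomputable def psComp (f g : PowerSeries ℚ) : PowerSeries ℚ :=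
  PowerSeries.mk fun n =>
    PowerSeries.coeff n (∑ k ∈ Finset.range (n + 1), PowerSeries.coeff k f • g ^ k)



def a : ℕ → ℚ := fun k => if k = 0 then 0 else (k : ℚ) ^ (k - 1) / k.factorial

lemma a_zero : a 0 = 0 := rfl

lemma coeff_pow_zero (g : PowerSeries ℚ) (hg : constantCoeff g = 0)
    {k n : ℕ} (h : n < k) : coeff n (g ^ k) = 0 := by
  have : (X : ℚ⟦X⟧)^k ∣ g^k := pow_dvd_pow_of_dvd (X_dvd_iff.mpr hg) k
  exact (X_pow_dvd_iff.mp this) n h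

lemma psComp_exp_coeff (g : PowerSeries ℚ) (hg : constantCoeff g = 0)
    {n N : ℕ} (h : n < N) :
    coeff n (psComp (exp ℚ) g)
      = ∑ k ∈ Finset.range N, (1 / k.factorial : ℚ) * coeff n (g ^ k) := by
  rw [psComp, coeff_mk, map_sum]
  have hsub : Finset.range (n+1) ⊆ Finset.range N := Finset.range_subset_range.mpr h
  rw [Finset.sum_subset hsub]
  · apply Finset.sum_congr rfl
    intro k _
    rw [LinearMap.map_smul, coeff_exp]
    simp [smul_eq_mul]
  · intro k _ hk
    simp only [Finset.mem_range, not_lt] at hk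
    rw [LinearMap.map_smul, coeff_pow_zero g hg (by omega)]
    simp

lemma fact_cancel (j : ℕ) : (1 / ((j+1).factorial) : ℚ) * ((j:ℚ)+1) = 1 / (j.factorial) := by
  rw [Nat.factorial_succ]
  have h1 : ((j.factorial : ℚ)) ≠ 0 := Nat.cast_ne_zero.mpr (Nat.factorial_ne_zero j)
  have h2 : ((j:ℚ)+1) ≠ 0 := by positivity
  push_cast
  field_simp

lemma psComp_exp_deriv (g : PowerSeries ℚ) (hg : constantCoeff g = 0) :
    d⁄dX ℚ (psComp (exp ℚ) g) = d⁄dX ℚ g * psComp (exp ℚ) g := by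
  ext n
  set T : PowerSeries ℚ := ∑ k ∈ Finset.range (n+2), ((1 / k.factorial : ℚ)) • g^k with hT
  set T' : PowerSeries ℚ := ∑ k ∈ Finset.range (n+3), ((1 / k.factorial : ℚ)) • g^k with hT'
  have hTd : d⁄dX ℚ T' = d⁄dX ℚ g * T := by
    rw [hT', map_sum]
    rw [Finset.sum_range_succ' (fun k => d⁄dX ℚ (((1 / k.factorial : ℚ)) • g^k)) (n+2)]
    have h0 : d⁄dX ℚ (((1 / (Nat.factorial 0) : ℚ)) • g^0) = 0 := by
      simp
    rw [h0, add_zero, hT, Finset.mul_sum]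
    apply Finset.sum_congr rfl
    intro j _
    rw [smul_eq_C_mul, smul_eq_C_mul]
    rw [Derivation.leibniz]
    rw [Derivation.leibniz_pow]
    simp only [map_add, derivative_C, smul_eq_mul, zero_mul, add_zero, mul_zero, zero_add,
      Nat.add_sub_cancel, smul_smul, nsmul_eq_mul]
    rw [show ((j+1 : ℕ) : PowerSeries ℚ) = C (((j+1:ℕ)):ℚ) from (map_natCast (C (R := ℚ)) (j+1)).symm]
    rw [show C (1 / ((j+1).factorial):ℚ) * (C (((j+1:ℕ)):ℚ) * (g^j * d⁄dX ℚ g))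
        = C ((1 / ((j+1).factorial):ℚ) * ((j+1:ℕ):ℚ)) * (g^j * d⁄dX ℚ g) from by
      rw [map_mul]; ring]
    rw [show (1 / ((j+1).factorial):ℚ) * ((j+1:ℕ):ℚ) = 1/(j.factorial) from by
      push_cast; exact fact_cancel j]
    ring
  have hL : coeff n (d⁄dX ℚ (psComp (exp ℚ) g)) = coeff n (d⁄dX ℚ T') := by
    rw [coeff_derivative, coeff_derivative]
    congr 1
    rw [psComp_exp_coeff g hg (by omega : n+1 < n+3), hT', map_sum]
    apply Finset.sum_congr rfl
    intro k _
    rw [LinearMap.map_smul, smul_eq_mul]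
  rw [hL, hTd, coeff_mul, coeff_mul]
  apply Finset.sum_congr rfl
  intro p hp
  have hp2 : p.2 ≤ n := by
    have := Finset.HasAntidiagonal.mem_antidiagonal.mp hp
    omega
  congr 1
  rw [psComp_exp_coeff g hg (by omega : p.2 < n+2), hT, map_sum]
  apply Finset.sum_congr rfl
  intro k _
  rw [LinearMap.map_smul, smul_eq_mul]

lemma conv_eq (n : ℕ) :
    ∑ i ∈ Finset.range (n+1), (i:ℚ) * a i * a (n-i) = (n:ℚ) * a n - a n := by
  rcases Nat.eq_zero_or_pos n with h | h
  · subst h; simp [a]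
  · have key : ∑ i ∈ Finset.range n, (n.choose i : ℚ) * (i:ℚ)^i * ((n-i:ℕ):ℚ)^(n-i-1)
        = (n:ℚ) * (n:ℚ)^(n-1) := by
      rw [← treeIdent n]
      apply Finset.sum_nbij' (fun i => n - i) (fun k => n - k)
      · intro i hi; simp only [Finset.mem_range] at hi; simp [Finset.mem_Icc]; omega
      · intro k hk; simp only [Finset.mem_Icc] at hk; simp [Finset.mem_range]; omega
      · intro i hi; simp only [Finset.mem_range] at hi; omega
      · intro k hk; simp only [Finset.mem_Icc] at hk; omega
      · intro i hi
        simp only [Finset.mem_range] at hi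
        rw [show n - (n-i) = i from by omega,
          Nat.choose_symm (by omega : i ≤ n)]
        ring
    have hsdiff : Finset.range n \ {0} = Finset.Ico 1 n := by
      ext j; simp [Finset.mem_Ico, Finset.mem_sdiff]; omega
    have hsplit := Finset.sum_eq_sum_sdiff_singleton_add (Finset.mem_range.mpr h)
      (fun i => (n.choose i : ℚ) * (i:ℚ)^i * ((n-i:ℕ):ℚ)^(n-i-1))
    rw [hsdiff] at hsplit
    have h0term : (n.choose 0 : ℚ) * ((0:ℕ):ℚ)^0 * ((n-0:ℕ):ℚ)^(n-0-1) = (n:ℚ)^(n-1) := by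
      simp
    rw [hsplit, h0term] at key
    -- key : ∑ i ∈ Ico 1 n, ... + n^(n-1) = n * n^(n-1)
    have hG : ∑ i ∈ Finset.range (n+1), (i:ℚ) * a i * a (n-i)
        = ∑ i ∈ Finset.Ico 1 n, (i:ℚ) * a i * a (n-i) := by
      symm
      apply Finset.sum_subset
      · intro i hi; simp only [Finset.mem_Ico] at hi; simp [Finset.mem_range]; omega
      · intro i hi hni
        simp only [Finset.mem_range] at hi
        simp only [Finset.mem_Ico, not_and, not_lt] at hni
        rcases Nat.eq_zero_or_pos i with h0 | h0
        · subst h0; simp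
        · have : n ≤ i := hni h0
          have : i = n := by omega
          subst this
          simp [a]
    rw [hG]
    have hterm : ∀ i ∈ Finset.Ico 1 n, (i:ℚ) * a i * a (n-i)
        = (1/(n.factorial:ℚ)) * ((n.choose i : ℚ) * (i:ℚ)^i * ((n-i:ℕ):ℚ)^(n-i-1)) := by
      intro i hi
      simp only [Finset.mem_Ico] at hi
      have hi0 : i ≠ 0 := by omega
      have hni0 : n - i ≠ 0 := by omega
      rw [show a i = (i:ℚ)^(i-1)/(i.factorial) from by simp [a, hi0],
        show a (n-i) = ((n-i:ℕ):ℚ)^(n-i-1)/((n-i).factorial) from by simp [a, hni0]]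
      have hfacts : (n.choose i : ℚ) * (i.factorial:ℚ) * ((n-i).factorial:ℚ)
          = (n.factorial:ℚ) := by
        exact_mod_cast Nat.choose_mul_factorial_mul_factorial (by omega : i ≤ n)
      have hpow : (i:ℚ)^i = (i:ℚ) * (i:ℚ)^(i-1) := by
        conv_lhs => rw [show i = (i-1)+1 from by omega]
        rw [pow_succ]
        rw [show (i-1)+1 = i from by omega]
        ring
      have hf1 : (i.factorial : ℚ) ≠ 0 := Nat.cast_ne_zero.mpr (Nat.factorial_ne_zero i)
      have hf2 : ((n-i).factorial : ℚ) ≠ 0 := Nat.cast_ne_zero.mpr (Nat.factorial_ne_zero _)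
      have hf3 : (n.factorial : ℚ) ≠ 0 := Nat.cast_ne_zero.mpr (Nat.factorial_ne_zero n)
      rw [hpow]
      field_simp
      linear_combination (-1:ℚ) * hfacts
    rw [Finset.sum_congr rfl hterm, ← Finset.mul_sum]
    have han : a n = (n:ℚ)^(n-1)/(n.factorial) := by simp [a, Nat.pos_iff_ne_zero.mp h]
    have hf3 : (n.factorial : ℚ) ≠ 0 := Nat.cast_ne_zero.mpr (Nat.factorial_ne_zero n)
    rw [han]
    field_simp
    linear_combination key

lemma hz : (X : PowerSeries ℚ) * d⁄dX ℚ (PowerSeries.mk a)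
    = PowerSeries.mk (fun m => (m:ℚ) * a m) := by
  ext n
  cases n with
  | zero => simp [coeff_zero_X_mul]
  | succ n =>
    rw [coeff_succ_X_mul, coeff_derivative, coeff_mk, coeff_mk]
    push_cast
    ring

lemma ODE : (X : PowerSeries ℚ) * d⁄dX ℚ (PowerSeries.mk a) * (1 - PowerSeries.mk a)
    = PowerSeries.mk a := by
  have expand : (X : PowerSeries ℚ) * d⁄dX ℚ (PowerSeries.mk a) * (1 - PowerSeries.mk a)
      = PowerSeries.mk (fun m => (m:ℚ) * a m)
        - PowerSeries.mk (fun m => (m:ℚ) * a m) * PowerSeries.mk a := by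
    rw [← hz]; ring
  rw [expand]
  ext n
  rw [map_sub, coeff_mk, coeff_mul]
  have : ∑ p ∈ Finset.HasAntidiagonal.antidiagonal n,
      coeff p.1 (PowerSeries.mk (fun m => (m:ℚ) * a m)) * coeff p.2 (PowerSeries.mk a)
      = ∑ i ∈ Finset.range (n+1), (i:ℚ) * a i * a (n-i) := by
    rw [Finset.Nat.sum_antidiagonal_eq_sum_range_succ_mk]
    apply Finset.sum_congr rfl
    intro i _
    rw [coeff_mk, coeff_mk]
  rw [this, conv_eq, coeff_mk]
  ring

theorem tree_function_lambert' :
    (PowerSeries.mk a) * psComp (PowerSeries.exp ℚ) (-(PowerSeries.mk a)) = PowerSeries.X := by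
  set y : PowerSeries ℚ := PowerSeries.mk a with hy
  have hy0 : constantCoeff (-y) = 0 := by
    rw [map_neg, hy]
    simp only [← coeff_zero_eq_constantCoeff_apply, coeff_mk]
    simp [a]
  set E : PowerSeries ℚ := psComp (PowerSeries.exp ℚ) (-y) with hE
  have hEd : d⁄dX ℚ E = d⁄dX ℚ (-y) * E := psComp_exp_deriv (-y) hy0
  set F : PowerSeries ℚ := y * E with hF
  have hFd : (X : PowerSeries ℚ) * d⁄dX ℚ F = F := by
    have h1 : d⁄dX ℚ F = d⁄dX ℚ y * E - y * (d⁄dX ℚ y * E) := by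
      rw [hF, Derivation.leibniz, hEd, map_neg]
      simp only [smul_eq_mul]
      ring
    calc (X : PowerSeries ℚ) * d⁄dX ℚ F
        = ((X : PowerSeries ℚ) * d⁄dX ℚ y * (1 - y)) * E := by rw [h1]; ring
      _ = y * E := by rw [hy, ODE]
      _ = F := by rw [hF]
  have hcoeff1 : coeff 1 F = 1 := by
    have e0 : coeff 0 E = 1 := by
      rw [hE, psComp, coeff_mk]
      simp [coeff_exp]
    have a0 : coeff 0 y = 0 := by rw [hy, coeff_mk]; simp [a]
    have a1 : coeff 1 y = 1 := by rw [hy, coeff_mk]; simp [a]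
    rw [hF, coeff_mul]
    rw [Finset.Nat.sum_antidiagonal_eq_sum_range_succ_mk]
    simp only [Finset.sum_range_succ, Finset.sum_range_zero, zero_add]
    norm_num
    simp only [← coeff_zero_eq_constantCoeff_apply]
    rw [a0, a1, e0]
    norm_num
  ext n
  cases n with
  | zero =>
    have := congrArg (coeff 0) hFd
    rw [coeff_zero_X_mul] at this
    rw [← this]
    simp
  | succ n =>
    have := congrArg (coeff (n+1)) hFd
    rw [coeff_succ_X_mul, coeff_derivative] at this
    -- this : coeff (n+1) F * (n+1) = coeff (n+1) F
    rcases Nat.eq_zero_or_pos n with h0 | h0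
    · subst h0
      rw [hcoeff1, coeff_X]
      simp
    · have hzero : coeff (n+1) F = 0 := by
        have hc : coeff (n+1) F * (n:ℚ) = 0 := by linear_combination this
        rcases mul_eq_zero.mp hc with h | h
        · exact h
        · exact absurd (by exact_mod_cast h : n = 0) (by omega)
      rw [hzero, coeff_X]
      simp [show n+1 ≠ 1 from by omega, Nat.pos_iff_ne_zero.mp h0]

/-- The tree function `y = ∑_{k≥1} k^(k-1) x^k / k!` satisfies
`y e^(-y) = x` as formal power series. -/
theorem tree_function_lambert :
    let y : PowerSeries ℚ :=
      PowerSeries.mk fun k => if k = 0 then 0 else (k : ℚ) ^ (k - 1) / k.factorial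
    y * psComp (PowerSeries.exp ℚ) (-y) = PowerSeries.X := by
  intro y
  exact tree_function_lambert'
end

section
/- The genus-0 one-point orbifold Hurwitz numbers H_{0,1}^r(d) = d^{⌊d/r⌋ - 2}/⌊d/r⌋! (for r | d) satisfy the rescaled (0,1) cut-and-join recursion: (d/r - 1)·d·H_{0,1}^r(d) = (1/2)·d·Σ_{α+β=d, α,β≥1, r|α, r|β} α·β·H_{0,1}^r(α)·H_{0,1}^r(β), for all d divisible by r with d > r. -/
open Polynomial Finset

/-- The genus-0 one-point orbifold Hurwitz numbers
`H⁰₀,₁(d) = d^(⌊d/r⌋-2)/⌊d/r⌋!` for `r ∣ d`, `d > 0`, and `0` otherwise. -/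
noncomputable def H01 (r d : ℕ) : ℚ :=
  if r ∣ d ∧ 0 < d then (d : ℚ) ^ ((d / r : ℤ) - 2) / (d / r).factorial else 0


lemma withbot_lt_succ {x : WithBot ℕ} {n : ℕ} (h : x < ((n+1 : ℕ) : WithBot ℕ)) :
    x ≤ (n : WithBot ℕ) := by
  cases x with
  | bot => exact bot_le
  | coe a =>
    rw [Nat.cast_withBot] at h
    rw [Nat.cast_withBot]
    rw [WithBot.coe_lt_coe] at h
    exact WithBot.coe_le_coe.mpr (Nat.lt_succ_iff.mp h)

lemma comp_X_add_one_ne_zero {p : ℚ[X]} (hp : p ≠ 0) : p.comp (X + 1) ≠ 0 := by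
  intro h
  apply hp
  have := congrArg (fun q => q.comp (X - 1)) h
  simpa [comp_assoc] using this

lemma degree_shift_sub_lt (p : ℚ[X]) (hp : p ≠ 0) :
    (p.comp (X + 1) - p).degree < p.degree := by
  have hX1 : (X + 1 : ℚ[X]).natDegree = 1 := by
    simpa using natDegree_X_add_C (1 : ℚ)
  have hdc : (p.comp (X + 1)).degree = p.degree := by
    rw [degree_eq_natDegree (comp_X_add_one_ne_zero hp), degree_eq_natDegree hp, natDegree_comp,
      hX1, mul_one]
  have := degree_sub_lt hdc (comp_X_add_one_ne_zero hp)
    (by rw [leadingCoeff_comp (by rw [hX1]; norm_num)]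
        have : (X + 1 : ℚ[X]).leadingCoeff = 1 := by simpa using (monic_X_add_C (1 : ℚ)).leadingCoeff
        rw [this, one_pow, mul_one])
  rwa [hdc] at this

lemma fd_lemma : ∀ (n : ℕ) (p : ℚ[X]), p.degree < (n : ℕ) →
    ∑ k ∈ range (n + 1), (-1 : ℚ) ^ k * (n.choose k) * p.eval (k : ℚ) = 0 := by
  intro n
  induction n with
  | zero =>
    intro p hp
    have hpz : p = 0 := by
      rw [← degree_eq_bot]
      exact Nat.WithBot.lt_zero_iff.mp (by exact_mod_cast hp)
    simp [hpz]
  | succ n ih =>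
    intro p hp
    rcases eq_or_ne p 0 with rfl | hp0
    · simp
    have key : ∑ k ∈ range (n + 1 + 1), (-1 : ℚ) ^ k * ((n+1).choose k) * p.eval (k : ℚ)
        = -∑ k ∈ range (n + 1), (-1 : ℚ) ^ k * (n.choose k) * (p.comp (X+1) - p).eval (k : ℚ) := by
      have expand : ∀ k ∈ range (n + 1 + 1),
          (-1 : ℚ) ^ k * ((n+1).choose k) * p.eval (k : ℚ)
          = (-1 : ℚ) ^ k * (n.choose k) * p.eval (k : ℚ)
            + (-1 : ℚ) ^ k * (if k = 0 then (0:ℚ) else ((n.choose (k-1) : ℕ) : ℚ)) * p.eval (k : ℚ) := by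
        intro k _
        cases k with
        | zero => simp
        | succ k => rw [Nat.choose_succ_succ]; push_cast; simp; ring
      rw [Finset.sum_congr rfl expand, Finset.sum_add_distrib]
      have h1 : ∑ k ∈ range (n + 1 + 1), (-1:ℚ)^k * (n.choose k) * p.eval (k:ℚ)
          = ∑ k ∈ range (n + 1), (-1:ℚ)^k * (n.choose k) * p.eval (k:ℚ) := by
        rw [Finset.sum_range_succ, Nat.choose_succ_self]; simp
      have h2 : ∑ k ∈ range (n + 1 + 1), (-1:ℚ)^k * (if k = 0 then (0:ℚ) else ((n.choose (k-1) : ℕ) : ℚ)) * p.eval (k:ℚ)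
          = ∑ k ∈ range (n + 1), (-1:ℚ)^(k+1) * (n.choose k) * p.eval ((k:ℚ)+1) := by
        rw [Finset.sum_range_succ']
        simp only [if_neg (Nat.succ_ne_zero _), Nat.succ_sub_one]
        push_cast
        simp
      rw [h1, h2, ← Finset.sum_neg_distrib, ← Finset.sum_add_distrib]
      apply Finset.sum_congr rfl
      intro k _
      simp only [eval_sub, eval_comp, eval_add, eval_X, eval_one]
      ring
    rw [key, ih _ (lt_of_lt_of_le (degree_shift_sub_lt p hp0) (withbot_lt_succ hp))]
    simp

noncomputable def abelw (x : ℚ) (k : ℕ) : ℚ := if k = 0 then 1 else x * (x + k) ^ (k - 1)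

noncomputable def abelP_s13 (n : ℕ) (x : ℚ) : ℚ[X] :=
  ∑ k ∈ range (n + 1), C ((n.choose k : ℚ) * abelw x k) * (X + C ((n - k : ℕ) : ℚ)) ^ (n - k)

lemma choose_sub_mul (n k : ℕ) (hk : k ≤ n) :
    (n + 1 - k) * (n+1).choose k = (n + 1) * n.choose k := by
  have h1 : (n+1).choose k = (n+1).choose (n+1-k) := (Nat.choose_symm (by omega)).symm
  have h2 : n + 1 - k = (n - k) + 1 := by omega
  have h3 := Nat.add_one_mul_choose_eq n (n - k)
  rw [Nat.choose_symm hk] at h3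
  rw [h1, h2, mul_comm]
  rw [show (n:ℕ)+1 = Nat.succ n from rfl, show (n-k)+1 = Nat.succ (n-k) from rfl, ← h3]

lemma neg_one_pow_sub (k m : ℕ) (hk : k ≤ m) :
    (-1:ℚ)^(m-k) = (-1:ℚ)^m * (-1:ℚ)^k := by
  have hk1 : ((-1:ℚ)^k) * ((-1:ℚ)^k) = 1 := by
    rw [← pow_add]
    exact Even.neg_one_pow ⟨k, rfl⟩
  have hadd : (-1:ℚ)^(m-k) * (-1:ℚ)^k = (-1:ℚ)^m := by
    rw [← pow_add]; congr 1; omega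
  calc (-1:ℚ)^(m-k) = (-1:ℚ)^(m-k) * (((-1:ℚ)^k) * ((-1:ℚ)^k)) := by rw [hk1, mul_one]
    _ = ((-1:ℚ)^(m-k) * (-1:ℚ)^k) * (-1:ℚ)^k := by ring
    _ = (-1:ℚ)^m * (-1:ℚ)^k := by rw [hadd]

lemma abel_poly_s13 : ∀ (n : ℕ) (x : ℚ), abelP_s13 n x = (X + C (x + n)) ^ n := by
  intro n
  induction n with
  | zero => intro x; simp [abelP_s13, abelw]
  | succ n ih =>
    intro x
    have hRD : derivative ((X + C (x + ((n+1:ℕ):ℚ))) ^ (n+1))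
        = C (((n+1:ℕ):ℚ)) * (X + C (x + ((n+1:ℕ):ℚ))) ^ n := by
      rw [derivative_X_add_C_pow]
      norm_num
    have hderiv : derivative (abelP_s13 (n+1) x) = C (((n+1:ℕ):ℚ)) * (X + C (x + ((n+1:ℕ):ℚ))) ^ n := by
      rw [abelP_s13, derivative_sum]
      rw [Finset.sum_range_succ]
      have hlast : derivative (C (((n+1).choose (n+1) : ℚ) * abelw x (n+1))
          * (X + C ((n + 1 - (n+1) : ℕ) : ℚ)) ^ (n + 1 - (n+1))) = 0 := by
        simp
      rw [hlast, add_zero]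
      have hcomp : (X + C (x + ((n+1:ℕ):ℚ))) ^ n = ((X + C (x + (n:ℕ))) ^ n).comp (X + 1) := by
        rw [pow_comp, add_comp, X_comp, C_comp]
        have h5 : (x + ((n+1:ℕ):ℚ)) = (x + (n:ℕ)) + 1 := by push_cast; ring
        rw [h5, map_add, C_1]
        ring_nf
      rw [hcomp, ← ih x, abelP_s13, Polynomial.sum_comp, Finset.mul_sum]
      apply Finset.sum_congr rfl
      intro k hk
      have hkn : k ≤ n := by simpa [Nat.lt_succ_iff] using hk
      rw [derivative_C_mul, derivative_X_add_C_pow]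
      rw [mul_comp, C_comp, pow_comp, add_comp, X_comp, C_comp]
      have e3 : n + 1 - k - 1 = n - k := by omega
      have e5 : X + C (((n - k : ℕ)) : ℚ) + 1 = X + C (((n + 1 - k : ℕ)) : ℚ) := by
        have h6 : ((n + 1 - k : ℕ) : ℚ) = ((n - k : ℕ) : ℚ) + 1 := by
          have h7 : (n + 1 - k) = (n - k) + 1 := by omega
          rw [h7]; push_cast; ring
        rw [h6, map_add, C_1]; ring
      have e4 : (((n+1).choose k : ℚ) * abelw x k) * ((n + 1 - k : ℕ) : ℚ)
          = ((n+1:ℕ):ℚ) * ((n.choose k : ℚ) * abelw x k) := by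
        have h8 := choose_sub_mul n k hkn
        have hq : ((n + 1 - k : ℕ) : ℚ) * (((n+1).choose k : ℕ) : ℚ)
            = ((n+1 : ℕ) : ℚ) * ((n.choose k : ℕ) : ℚ) := by exact_mod_cast h8
        calc (((n+1).choose k : ℚ) * abelw x k) * ((n + 1 - k : ℕ) : ℚ)
            = (((n + 1 - k : ℕ) : ℚ) * (((n+1).choose k : ℕ) : ℚ)) * abelw x k := by ring
          _ = (((n+1 : ℕ) : ℚ) * ((n.choose k : ℕ) : ℚ)) * abelw x k := by rw [hq]
          _ = ((n+1:ℕ):ℚ) * ((n.choose k : ℚ) * abelw x k) := by ring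
      rw [e3]
      have e5' : X + 1 + C (((n - k : ℕ)) : ℚ) = X + C (((n + 1 - k : ℕ)) : ℚ) := by
        rw [← e5]; ring
      rw [e5']
      have e4C := congrArg C e4
      simp only [map_mul] at e4C ⊢
      linear_combination (X + C (((n + 1 - k : ℕ)) : ℚ)) ^ (n - k) * e4C
    have hd0 : derivative (abelP_s13 (n+1) x - (X + C (x + ((n+1:ℕ):ℚ))) ^ (n+1)) = 0 := by
      rw [derivative_sub, hderiv, hRD, sub_self]
    have hc := eq_C_of_derivative_eq_zero hd0
    have heval : (abelP_s13 (n+1) x).eval (-(x + ((n+1:ℕ):ℚ))) = 0 := by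
      rw [abelP_s13, eval_finset_sum]
      have hterm : ∀ k ∈ range (n+1+1),
          eval (-(x + ((n+1:ℕ):ℚ))) (C (((n+1).choose k : ℚ) * abelw x k) * (X + C ((n+1-k:ℕ):ℚ)) ^ (n+1-k))
          = ((-1:ℚ)^(n+1) * x) * ((-1:ℚ)^k * (((n+1).choose k : ℚ)) * ((X + C x)^n).eval (k:ℚ)) := by
        intro k hk
        have hkle : k ≤ n + 1 := by simpa [Nat.lt_succ_iff] using hk
        have hcast : ((n+1-k:ℕ):ℚ) = ((n+1:ℕ):ℚ) - k := by
          rw [Nat.cast_sub hkle]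
        rw [eval_mul, eval_C, eval_pow, eval_add, eval_X, eval_C, hcast]
        have hbase : -(x + ((n+1:ℕ):ℚ)) + (((n+1:ℕ):ℚ) - (k:ℚ)) = -(x + k) := by ring
        rw [hbase]
        have hevq : ((X + C x)^n).eval (k:ℚ) = ((k:ℚ) + x)^n := by
          rw [eval_pow, eval_add, eval_X, eval_C]
        rw [hevq, neg_pow (x + (k:ℚ)) (n+1-k), neg_one_pow_sub k (n+1) hkle]
        rcases Nat.eq_zero_or_pos k with rfl | hkpos
        · simp [abelw]
          ring
        · rw [abelw, if_neg (by omega)]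
          have hexp : (x + (k:ℚ))^(k-1) * (x+(k:ℚ))^(n+1-k) = (x+(k:ℚ))^n := by
            rw [← pow_add]
            congr 1
            omega
          calc ((n+1).choose k : ℚ) * (x * (x + (k:ℚ))^(k-1)) * ((-1:ℚ)^(n+1) * (-1:ℚ)^k * (x + (k:ℚ))^(n+1-k))
              = ((-1:ℚ)^(n+1) * x) * ((-1:ℚ)^k * ((n+1).choose k : ℚ)
                  * ((x + (k:ℚ))^(k-1) * (x+(k:ℚ))^(n+1-k))) := by ring
            _ = ((-1:ℚ)^(n+1) * x) * ((-1:ℚ)^k * ((n+1).choose k : ℚ) * ((k:ℚ)+x)^n) := by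
                rw [hexp]
                ring
      rw [Finset.sum_congr rfl hterm, ← Finset.mul_sum]
      have hdeg : ((X + C x : ℚ[X])^n).degree < ((n+1 : ℕ) : WithBot ℕ) := by
        have h1 : ((X + C x : ℚ[X])^n).degree = n • (1 : WithBot ℕ) := by
          rw [degree_pow, degree_X_add_C]
        rw [h1]
        have : n • (1 : WithBot ℕ) = (n : WithBot ℕ) := by
          simp [nsmul_eq_mul]
        rw [this]
        exact_mod_cast Nat.lt_succ_self n
      rw [fd_lemma (n+1) ((X + C x)^n) hdeg, mul_zero]
    have hRz : ((X + C (x + ((n+1:ℕ):ℚ))) ^ (n+1)).eval (-(x + ((n+1:ℕ):ℚ))) = 0 := by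
      rw [eval_pow, eval_add, eval_X, eval_C]
      push_cast
      ring_nf
    have hcz : abelP_s13 (n+1) x - (X + C (x + ((n+1:ℕ):ℚ))) ^ (n+1) = 0 := by
      rw [hc]
      have := congrArg (eval (-(x + ((n+1:ℕ):ℚ)))) hc
      rw [eval_sub, heval, hRz, eval_C] at this
      rw [← this]
      simp
    exact sub_eq_zero.mp hcz

noncomputable def abelW (k : ℕ) : ℚ[X] := if k = 0 then 1 else X * (X + C (k:ℚ)) ^ (k - 1)

lemma abel_scalar (n : ℕ) (x y : ℚ) :
    ∑ k ∈ range (n+1), (n.choose k : ℚ) * abelw x k * (y + ((n-k:ℕ):ℚ))^(n-k) = (x + y + n)^n := by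
  have h := congrArg (eval y) (abel_poly_s13 n x)
  rw [abelP_s13, eval_finset_sum, eval_pow, eval_add, eval_X, eval_C] at h
  have h2 : ∀ k ∈ range (n+1),
      eval y (C ((n.choose k : ℚ) * abelw x k) * (X + C ((n - k : ℕ) : ℚ)) ^ (n - k))
      = (n.choose k : ℚ) * abelw x k * (y + ((n-k:ℕ):ℚ))^(n-k) := by
    intro k _
    rw [eval_mul, eval_C, eval_pow, eval_add, eval_X, eval_C]
  rw [Finset.sum_congr rfl h2] at h
  rw [h]
  ring

lemma F_eq (n : ℕ) :
    (∑ k ∈ range (n+1), C ((n.choose k : ℚ) * ((n-k:ℕ):ℚ)^(n-k)) * abelW k)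
      = (X + C ((n:ℕ):ℚ)) ^ n := by
  apply Polynomial.funext
  intro x
  rw [eval_finset_sum, eval_pow, eval_add, eval_X, eval_C]
  have h2 : ∀ k ∈ range (n+1),
      eval x (C ((n.choose k : ℚ) * ((n-k:ℕ):ℚ)^(n-k)) * abelW k)
      = (n.choose k : ℚ) * abelw x k * (0 + ((n-k:ℕ):ℚ))^(n-k) := by
    intro k _
    rw [eval_mul, eval_C, abelW, abelw]
    rcases eq_or_ne k 0 with rfl | hk
    · simp
    · rw [if_neg hk, if_neg hk, eval_mul, eval_X, eval_pow, eval_add, eval_X, eval_C, zero_add]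
      ring
  rw [Finset.sum_congr rfl h2, abel_scalar n x 0]
  ring_nf

lemma key_lemma (n : ℕ) :
    ∑ k ∈ range (n+1), (n.choose k : ℚ) * ((n-k:ℕ):ℚ)^(n-k)
        * (if k = 0 then (0:ℚ) else (k:ℚ)^(k-1))
      = (n:ℚ) * (n:ℚ)^(n-1) := by
  have h := congrArg (fun p => eval 0 (derivative p)) (F_eq n)
  rw [derivative_sum] at h
  have hR : eval 0 (derivative ((X + C ((n:ℕ):ℚ)) ^ n)) = (n:ℚ) * (n:ℚ)^(n-1) := by
    rw [derivative_X_add_C_pow, eval_mul, eval_C, eval_pow, eval_add, eval_X, eval_C, zero_add]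
  rw [eval_finset_sum] at h
  have h2 : ∀ k ∈ range (n+1),
      eval 0 (derivative (C ((n.choose k : ℚ) * ((n-k:ℕ):ℚ)^(n-k)) * abelW k))
      = (n.choose k : ℚ) * ((n-k:ℕ):ℚ)^(n-k) * (if k = 0 then (0:ℚ) else (k:ℚ)^(k-1)) := by
    intro k _
    rw [derivative_C_mul, eval_mul, eval_C, abelW]
    rcases eq_or_ne k 0 with rfl | hk
    · simp
    · rw [if_neg hk, if_neg hk]
      rw [derivative_mul, derivative_X, derivative_X_add_C_pow, one_mul, eval_add, eval_mul,
        eval_X, zero_mul, add_zero, eval_pow, eval_add, eval_X, eval_C, zero_add]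
  rw [Finset.sum_congr rfl h2] at h
  rw [h, hR]

lemma Tval (n : ℕ) (hn : 2 ≤ n) :
    ∑ a ∈ Ioo 0 n, (n.choose a : ℚ) * (a:ℚ)^(a-1) * ((n-a:ℕ):ℚ)^(n-a-1)
      = 2 * ((n:ℚ) - 1) * (n:ℚ)^(n-2) := by
  set f : ℕ → ℚ := fun k => (n.choose k : ℚ) * ((n-k:ℕ):ℚ)^(n-k)
      * (if k = 0 then (0:ℚ) else (k:ℚ)^(k-1)) with hf
  have hsplit : ∑ k ∈ range (n+1), f k = ∑ a ∈ Ioo 0 n, f a + f n := by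
    rw [Finset.sum_range_succ]
    congr 1
    have h0 : (0:ℕ) ∈ range n := by simp; omega
    rw [← Finset.sum_erase_add (range n) f h0, hf]
    simp only [if_pos rfl, mul_zero, add_zero]
    have hset : (range n).erase 0 = Ioo 0 n := by
      ext a
      simp only [Finset.mem_erase, Finset.mem_range, Finset.mem_Ioo]
      omega
    rw [hset]
    norm_num
  have hfn : f n = (n:ℚ)^(n-1) := by
    rw [hf]
    simp only [Nat.choose_self, Nat.cast_one, Nat.sub_self, pow_zero, Nat.cast_zero,
      if_neg (by omega : ¬ n = 0)]
    ring
  have hS2 : ∑ a ∈ Ioo 0 n, f a = (n:ℚ) * (n:ℚ)^(n-1) - (n:ℚ)^(n-1) := by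
    have := key_lemma n
    rw [hsplit, hfn] at this
    linarith
  -- S1 = S2 by symmetry
  have hS1 : ∑ a ∈ Ioo 0 n, (n.choose a : ℚ) * (a:ℚ)^a * ((n-a:ℕ):ℚ)^(n-a-1)
      = ∑ a ∈ Ioo 0 n, f a := by
    apply Finset.sum_nbij' (fun a => n - a) (fun a => n - a)
    · intro a ha; simp only [Finset.mem_Ioo] at *; omega
    · intro a ha; simp only [Finset.mem_Ioo] at *; omega
    · intro a ha; simp only [Finset.mem_Ioo] at ha; omega
    · intro a ha; simp only [Finset.mem_Ioo] at ha; omega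
    · intro a ha
      simp only [Finset.mem_Ioo] at ha
      rw [hf]
      simp only [if_neg (by omega : ¬ n - a = 0)]
      rw [Nat.choose_symm (by omega : a ≤ n)]
      have h1 : n - (n - a) = a := by omega
      rw [h1]
  -- n * T = S1 + S2
  have hnT : (n:ℚ) * (∑ a ∈ Ioo 0 n, (n.choose a : ℚ) * (a:ℚ)^(a-1) * ((n-a:ℕ):ℚ)^(n-a-1))
      = (∑ a ∈ Ioo 0 n, (n.choose a : ℚ) * (a:ℚ)^a * ((n-a:ℕ):ℚ)^(n-a-1))
        + ∑ a ∈ Ioo 0 n, f a := by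
    rw [Finset.mul_sum, ← Finset.sum_add_distrib]
    apply Finset.sum_congr rfl
    intro a ha
    simp only [Finset.mem_Ioo] at ha
    rw [hf]
    simp only [if_neg (by omega : ¬ a = 0)]
    have h1 : (a:ℚ)^a = (a:ℚ) * (a:ℚ)^(a-1) := by
      rw [← pow_succ']
      congr 1
      omega
    have h2 : ((n-a:ℕ):ℚ)^(n-a) = ((n-a:ℕ):ℚ) * ((n-a:ℕ):ℚ)^(n-a-1) := by
      rw [← pow_succ']
      congr 1
      omega
    have h3 : (a:ℚ) + ((n-a:ℕ):ℚ) = (n:ℚ) := by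
      have : ((n-a:ℕ):ℚ) = (n:ℚ) - (a:ℚ) := by
        rw [Nat.cast_sub (by omega : a ≤ n)]
      rw [this]; ring
    rw [h1, h2]
    linear_combination (-(n.choose a : ℚ) * (a:ℚ)^(a-1) * ((n-a:ℕ):ℚ)^(n-a-1)) * h3
  rw [hS1, hS2] at hnT
  have hn0 : (n:ℚ) ≠ 0 := by positivity
  have hpow : (n:ℚ)^(n-1) = (n:ℚ) * (n:ℚ)^(n-2) := by
    conv_lhs => rw [show n - 1 = (n-2)+1 by omega]
    rw [pow_succ]; ring
  apply mul_left_cancel₀ hn0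
  rw [hnT, hpow]
  ring

lemma H_term (r a : ℕ) (hr : 0 < r) (ha : 0 < a) :
    ((r*a : ℕ) : ℚ) * H01 r (r*a) = ((r*a : ℕ):ℚ)^(a-1) / (a.factorial : ℚ) := by
  have hpos : 0 < r * a := Nat.mul_pos hr ha
  rw [H01, if_pos ⟨Dvd.intro a rfl, hpos⟩]
  have hdiv : r * a / r = a := Nat.mul_div_cancel_left a hr
  rw [hdiv]
  have hc : ((r*a : ℕ) : ℚ) ≠ 0 := by positivity
  have hdivZ : ((r*a : ℕ) : ℤ) / ((r : ℕ) : ℤ) = (a : ℤ) := by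
    rw [← Int.natCast_div, hdiv]
  rw [show ((r*a : ℕ) : ℤ) / ((r : ℕ) : ℤ) - 2 = (a:ℤ) - 2 from by rw [hdivZ]]
  rw [mul_div_assoc']
  congr 1
  have h1 : ((r*a : ℕ) : ℚ) * ((r*a : ℕ) : ℚ) ^ ((a:ℤ) - 2)
      = ((r*a : ℕ) : ℚ) ^ ((a:ℤ) - 1) := by
    rw [mul_comm, ← zpow_add_one₀ hc]
    congr 1
    ring
  rw [h1, show (a:ℤ) - 1 = ((a - 1 : ℕ) : ℤ) by omega, zpow_natCast]

/-- The rescaled (0,1) cut-and-join recursion for orbifold Hurwitz numbers: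
with `𝓗(d) = d · H₀,₁ʳ(d)` (vanishing when `r ∤ d`), for every `d` divisible
by `r` with `d > r`,
`(d/r - 1) 𝓗(d) = (1/2) d ∑_{α+β=d, α,β ≥ 1} 𝓗(α) 𝓗(β)`. -/
theorem orbifold_H01_cut_and_join (r : ℕ) (hr : 0 < r) (d : ℕ) (hdvd : r ∣ d)
    (hd : r < d) :
    ((d / r : ℕ) - 1 : ℚ) * ((d : ℚ) * H01 r d) =
      (1 / 2) * (d : ℚ) *
        ∑ α ∈ Finset.Ioo 0 d,
          ((α : ℚ) * H01 r α) * (((d - α : ℕ) : ℚ) * H01 r (d - α)) := by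
  obtain ⟨m, rfl⟩ := hdvd
  have hm2 : 2 ≤ m := by
    by_contra h
    interval_cases m <;> omega
  have hdr : r * m / r = m := Nat.mul_div_cancel_left m hr
  have hmfac : ((m.factorial : ℕ) : ℚ) ≠ 0 := by positivity
  -- step 1: restrict sum to multiples of r
  have hfilter : ∑ α ∈ Finset.Ioo 0 (r*m),
        ((α : ℚ) * H01 r α) * (((r*m - α : ℕ) : ℚ) * H01 r (r*m - α))
      = ∑ α ∈ (Finset.Ioo 0 (r*m)).filter (fun α => r ∣ α),
        ((α : ℚ) * H01 r α) * (((r*m - α : ℕ) : ℚ) * H01 r (r*m - α)) := by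
    rw [Finset.sum_filter_of_ne]
    intro α hα hne
    by_contra hnd
    apply hne
    rw [H01, if_neg (by tauto)]
    ring
  -- step 2: reindex α = r * a
  have hbij : ∑ α ∈ (Finset.Ioo 0 (r*m)).filter (fun α => r ∣ α),
        ((α : ℚ) * H01 r α) * (((r*m - α : ℕ) : ℚ) * H01 r (r*m - α))
      = ∑ a ∈ Finset.Ioo 0 m,
        (((r*a : ℕ) : ℚ) * H01 r (r*a)) * (((r*(m-a) : ℕ) : ℚ) * H01 r (r*(m-a))) := by
    apply Finset.sum_nbij' (fun α => α / r) (fun a => r * a)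
    · intro α hα
      simp only [Finset.mem_filter, Finset.mem_Ioo] at hα
      obtain ⟨⟨h1, h2⟩, b, rfl⟩ := hα
      simp only [Finset.mem_Ioo]
      rw [Nat.mul_div_cancel_left b hr]
      constructor
      · by_contra h; push_neg at h; interval_cases b <;> omega
      · by_contra h; push_neg at h; nlinarith
    · intro a ha
      simp only [Finset.mem_Ioo] at ha
      simp only [Finset.mem_filter, Finset.mem_Ioo]
      exact ⟨⟨Nat.mul_pos hr ha.1, by nlinarith [ha.2]⟩, Dvd.intro a rfl⟩
    · intro α hα
      simp only [Finset.mem_filter] at hα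
      obtain ⟨-, b, rfl⟩ := hα
      rw [Nat.mul_div_cancel_left b hr]
    · intro a ha
      exact Nat.mul_div_cancel_left a hr
    · intro α hα
      simp only [Finset.mem_filter, Finset.mem_Ioo] at hα
      obtain ⟨⟨h1, h2⟩, b, rfl⟩ := hα
      rw [Nat.mul_div_cancel_left b hr]
      have : r * m - r * b = r * (m - b) := by
        rw [Nat.mul_sub]
      rw [this]
  rw [hfilter, hbij]
  -- step 3: rewrite each term
  have hterm : ∀ a ∈ Finset.Ioo 0 m,
      (((r*a : ℕ) : ℚ) * H01 r (r*a)) * (((r*(m-a) : ℕ) : ℚ) * H01 r (r*(m-a)))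
      = (r:ℚ)^(m-2) / (m.factorial : ℚ)
          * ((m.choose a : ℚ) * (a:ℚ)^(a-1) * ((m-a:ℕ):ℚ)^(m-a-1)) := by
    intro a ha
    simp only [Finset.mem_Ioo] at ha
    rw [H_term r a hr ha.1, H_term r (m-a) hr (by omega)]
    have hra : ((r*a : ℕ):ℚ)^(a-1) = (r:ℚ)^(a-1) * (a:ℚ)^(a-1) := by
      push_cast; rw [mul_pow]
    have hrma : ((r*(m-a) : ℕ):ℚ)^(m-a-1) = (r:ℚ)^(m-a-1) * ((m-a:ℕ):ℚ)^(m-a-1) := by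
      push_cast; rw [mul_pow]
    rw [hra, hrma]
    have hrpow : (r:ℚ)^(a-1) * (r:ℚ)^(m-a-1) = (r:ℚ)^(m-2) := by
      rw [← pow_add]; congr 1; omega
    have hfact : (m.choose a : ℚ) * (a.factorial : ℚ) * ((m-a).factorial : ℚ)
        = (m.factorial : ℚ) := by
      exact_mod_cast congrArg (fun t : ℕ => (t:ℚ))
        (Nat.choose_mul_factorial_mul_factorial (le_of_lt ha.2))
    have hfa : (a.factorial : ℚ) ≠ 0 := by positivity
    have hfma : ((m-a).factorial : ℚ) ≠ 0 := by positivity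
    rw [div_mul_div_comm, div_mul_eq_mul_div, div_eq_div_iff (mul_ne_zero hfa hfma) hmfac]
    linear_combination ((a:ℚ)^(a-1) * ((m-a:ℕ):ℚ)^(m-a-1) * (m.factorial : ℚ)) * hrpow
      - ((r:ℚ)^(m-2) * (a:ℚ)^(a-1) * ((m-a:ℕ):ℚ)^(m-a-1)) * hfact
  rw [Finset.sum_congr rfl hterm, ← Finset.mul_sum, Tval m hm2, hdr,
    H_term r m hr (by omega)]
  have hsplit : ((r*m : ℕ):ℚ)^(m-1) = ((r:ℚ)*(m:ℚ)) * ((r:ℚ)^(m-2) * (m:ℚ)^(m-2)) := by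
    push_cast
    rw [show m-1 = (m-2)+1 by omega, pow_succ, mul_pow]
    ring
  rw [hsplit]
  push_cast
  field_simp
end
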